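/- For real s < −1, Σ_{k=1}^∞ s_{−s−1/2, 1/2}(2πk) / k^{1/2−s} = −1/(2s(2π)^{s−1/2}) · ( 1/2 + 1/(s−1) ). -/

import Mathlib

open Complex Real Filter Set MeasureTheory

/-- Pochhammer symbol `(b)ₙ`. -/
noncomputable def poch (b : ℂ) (n : ℕ) : ℂ := ∏ i ∈ Finset.range n, (b + i)

/-- The generalized hypergeometric function `₁F₂(1; b₁, b₂; w)`. -/
noncomputable def oneF2 (b₁ b₂ w : ℂ) : ℂ := ∑' n : ℕ, w ^ n / (poch b₁ n * poch b₂ n)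

/-- The Lommel function of the first kind `s_{μ,ν}(z)`. -/
noncomputable def lommel_s (μ ν z : ℂ) : ℂ :=
  z ^ (μ + 1) / ((μ - ν + 1) * (μ + ν + 1)) *
    oneF2 ((μ - ν + 3) / 2) ((μ + ν + 3) / 2) (-z ^ 2 / 4)

/-- The Bessel function of the first kind `J_ν(z)`. -/
noncomputable def besselJ (ν z : ℂ) : ℂ :=
  ∑' m : ℕ, (-1) ^ m / (Complex.Gamma (m + 1) * Complex.Gamma (ν + m + 1)) * (z / 2) ^ (ν + 2 * m)

/-- The Lommel function of the second kind `S_{μ,ν}(z)` (for `ν ∉ ℤ`). -/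
noncomputable def lommel_S (μ ν z : ℂ) : ℂ :=
  lommel_s μ ν z +
    2 ^ (μ - 1) * Complex.Gamma ((μ - ν + 1) / 2) * Complex.Gamma ((μ + ν + 1) / 2) /
      Complex.sin (ν * (π : ℂ)) *
      (Complex.cos ((μ - ν) * (π : ℂ) / 2) * besselJ (-ν) z -
        Complex.cos ((μ + ν) * (π : ℂ) / 2) * besselJ ν z)



-- product lemmas
lemma prodD_pos {c : ℝ} (hc : 0 < c) (n : ℕ) : 0 < ∏ j ∈ Finset.range n, (c + 1 + j) :=
  Finset.prod_pos fun j _ => by positivity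

lemma prodD_ge_fact {c : ℝ} (hc : 0 < c) (n : ℕ) :
    (n.factorial : ℝ) ≤ ∏ j ∈ Finset.range n, (c + 1 + j) := by
  rw [← Finset.prod_range_add_one_eq_factorial n]
  push_cast
  refine Finset.prod_le_prod (fun j _ => by positivity) (fun j _ => by push_cast; linarith)

lemma cont_rpow {c : ℝ} (hc : 0 < c) : Continuous (fun u : ℝ => u ^ c) := by
  rw [continuous_iff_continuousAt]
  exact fun x => Real.continuousAt_rpow_const x c (Or.inr hc.le)

lemma beta_int : ∀ (n : ℕ) (c : ℝ), 0 < c →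
    ∫ u in (0:ℝ)..1, u ^ c * (1 - u) ^ n =
      (n.factorial : ℝ) / ∏ j ∈ Finset.range (n + 1), (c + 1 + j) := by
  intro n
  induction n with
  | zero =>
    intro c hc
    simp only [pow_zero, mul_one, Nat.factorial_zero, Finset.prod_range_one]
    rw [integral_rpow (Or.inl (by linarith))]
    rw [Real.one_rpow, Real.zero_rpow (by linarith)]
    norm_num
  | succ n ih =>
    intro c hc
    have key : ∫ u in (0:ℝ)..1,
        (u ^ c * (1 - u) ^ (n + 1) - ((n:ℝ) + 1) / (c + 1) * (u ^ (c + 1) * (1 - u) ^ n)) = 0 := by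
      have hderiv : ∀ u ∈ Set.uIcc (0:ℝ) 1,
          HasDerivAt (fun v : ℝ => v ^ (c + 1) * (1 - v) ^ (n + 1) / (c + 1))
            (u ^ c * (1 - u) ^ (n + 1) - ((n:ℝ) + 1) / (c + 1) * (u ^ (c + 1) * (1 - u) ^ n)) u := by
        intro u _
        have h1 : HasDerivAt (fun v : ℝ => v ^ (c + 1)) ((c + 1) * u ^ c) u := by
          have := Real.hasDerivAt_rpow_const (x := u) (p := c + 1) (Or.inr (by linarith))
          simpa using this
        have h2 : HasDerivAt (fun v : ℝ => (1 - v) ^ (n + 1))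
            (-(((n:ℝ) + 1) * (1 - u) ^ n)) u := by
          have hin : HasDerivAt (fun v : ℝ => 1 - v) (-1) u := by
            simpa using (hasDerivAt_id' u).const_sub (1:ℝ)
          have := (hasDerivAt_pow (n + 1) (1 - u)).comp u hin
          simpa [mul_comm, mul_assoc, Function.comp_def] using this
        have := (h1.mul h2).div_const (c + 1)
        refine this.congr_deriv ?_
        field_simp [show c + 1 ≠ 0 by linarith]
        ring
      rw [intervalIntegral.integral_eq_sub_of_hasDerivAt hderiv ?_]
      · norm_num [Real.zero_rpow (show c + 1 ≠ 0 by linarith)]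
      · apply ContinuousOn.intervalIntegrable
        apply ContinuousOn.sub
        · exact (((cont_rpow hc).continuousOn).mul (by fun_prop))
        · exact ContinuousOn.mul (by fun_prop)
            (((cont_rpow (by linarith : (0:ℝ) < c + 1)).continuousOn).mul (by fun_prop))
    have int1 : IntervalIntegrable (fun u : ℝ => u ^ c * (1 - u) ^ (n + 1)) volume 0 1 :=
      (((cont_rpow hc).continuousOn).mul (by fun_prop)).intervalIntegrable
    have int2 : IntervalIntegrable
        (fun u : ℝ => ((n:ℝ) + 1) / (c + 1) * (u ^ (c + 1) * (1 - u) ^ n)) volume 0 1 :=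
      (ContinuousOn.mul (by fun_prop)
        (((cont_rpow (by linarith : (0:ℝ) < c + 1)).continuousOn).mul (by fun_prop))).intervalIntegrable
    rw [intervalIntegral.integral_sub int1 int2] at key
    have heq : ∫ u in (0:ℝ)..1, u ^ c * (1 - u) ^ (n + 1) =
        ((n:ℝ) + 1) / (c + 1) * ∫ u in (0:ℝ)..1, u ^ (c + 1) * (1 - u) ^ n := by
      rw [← intervalIntegral.integral_const_mul] at *
      linarith [key]
    rw [heq, ih (c + 1) (by linarith)]
    have hprod : ∏ j ∈ Finset.range (n + 2), (c + 1 + (j:ℝ)) =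
        (∏ j ∈ Finset.range (n + 1), (c + 1 + 1 + (j:ℝ))) * (c + 1) := by
      rw [Finset.prod_range_succ']
      congr 1
      · exact Finset.prod_congr rfl fun j _ => by push_cast; ring
      · norm_num
    have hne : (0:ℝ) < ∏ j ∈ Finset.range (n + 1), (c + 1 + 1 + (j:ℝ)) := by
      exact Finset.prod_pos fun j _ => by positivity
    rw [show n + 1 + 1 = n + 2 from rfl, hprod, Nat.factorial_succ]
    push_cast
    field_simp

lemma summable_odd_fact (x : ℝ) :
    Summable (fun n : ℕ => |x| ^ (2 * n + 1) / ((2 * n + 1).factorial : ℝ)) := by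
  apply (Real.summable_pow_div_factorial |x|).comp_injective
  intro a b h; simp only [] at h; omega

lemma sin_int_series {c : ℝ} (hc : 0 < c) (x : ℝ) :
    ∫ u in (0:ℝ)..1, u ^ c * Real.sin (x * (1 - u)) =
      ∑' n : ℕ, (-1) ^ n * x ^ (2 * n + 1) / ∏ j ∈ Finset.range (2 * n + 2), (c + 1 + j) := by
  set F : ℕ → ℝ → ℝ := fun n u =>
    ((-1) ^ n * x ^ (2 * n + 1) / (((2 * n + 1).factorial : ℕ) : ℝ)) * (u ^ c * (1 - u) ^ (2 * n + 1))
    with hF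
  have hcont : ∀ n, Continuous (F n) := fun n =>
    continuous_const.mul ((cont_rpow hc).mul (by fun_prop))
  have hint : ∀ n, IntegrableOn (F n) (Set.Ioc (0:ℝ) 1) volume := fun n =>
    (hcont n).integrableOn_Ioc
  have hbound : ∀ n, (∫ u in Set.Ioc (0:ℝ) 1, ‖F n u‖) ≤
      |x| ^ (2 * n + 1) / ((2 * n + 1).factorial : ℝ) := by
    intro n
    have : ∀ u ∈ Set.Ioc (0:ℝ) 1, ‖F n u‖ ≤ |x| ^ (2 * n + 1) / ((2 * n + 1).factorial : ℝ) := by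
      intro u hu
      obtain ⟨hu0, hu1⟩ := hu
      have h1 : u ^ c ≤ 1 := Real.rpow_le_one hu0.le hu1 hc.le
      have h2 : (1 - u) ^ (2 * n + 1) ≤ 1 := by
        apply pow_le_one₀ (by linarith) (by linarith)
      have h3 : (0:ℝ) ≤ u ^ c := Real.rpow_nonneg hu0.le c
      have h4 : (0:ℝ) ≤ (1 - u) ^ (2 * n + 1) := pow_nonneg (by linarith) _
      rw [hF, norm_mul, norm_mul]
      calc ‖(-1:ℝ) ^ n * x ^ (2*n+1) / (((2*n+1).factorial : ℕ) : ℝ)‖ * (‖u ^ c‖ * ‖(1-u)^(2*n+1)‖)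
          ≤ ‖(-1:ℝ) ^ n * x ^ (2*n+1) / (((2*n+1).factorial : ℕ) : ℝ)‖ * 1 := by
            apply mul_le_mul_of_nonneg_left _ (norm_nonneg _)
            rw [Real.norm_of_nonneg h3, Real.norm_of_nonneg h4]
            calc u ^ c * (1-u)^(2*n+1) ≤ 1 * 1 := mul_le_mul h1 h2 h4 (by norm_num)
            _ = 1 := by norm_num
        _ = |x| ^ (2 * n + 1) / ((2 * n + 1).factorial : ℝ) := by
            rw [norm_div, norm_mul, norm_pow, norm_pow, mul_one]
            simp [abs_of_nonneg (Nat.cast_nonneg (α := ℝ) _)]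
    calc (∫ u in Set.Ioc (0:ℝ) 1, ‖F n u‖)
        ≤ ∫ _ in Set.Ioc (0:ℝ) 1, |x| ^ (2 * n + 1) / ((2 * n + 1).factorial : ℝ) := by
          apply setIntegral_mono_on (hint n).norm (integrableOn_const (by simp)) measurableSet_Ioc this
      _ = |x| ^ (2 * n + 1) / ((2 * n + 1).factorial : ℝ) := by simp
  have hsum : Summable fun n => ∫ u in Set.Ioc (0:ℝ) 1, ‖F n u‖ := by
    apply Summable.of_nonneg_of_le (fun n => integral_nonneg (fun u => norm_nonneg _)) hbound
      (summable_odd_fact x)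
  have hswap := MeasureTheory.integral_tsum_of_summable_integral_norm hint hsum
  have hptw : ∀ u : ℝ, (∑' n, F n u) = u ^ c * Real.sin (x * (1 - u)) := by
    intro u
    have hs := (Real.hasSum_sin (x * (1 - u))).mul_left (u ^ c)
    have : HasSum (fun n => F n u) (u ^ c * Real.sin (x * (1 - u))) := by
      convert hs using 2 with n
      rfl
      rw [hF]
      simp only [mul_pow]
      ring
    exact this.tsum_eq
  have hlhs : ∫ u in (0:ℝ)..1, u ^ c * Real.sin (x * (1 - u)) =
      ∫ u in Set.Ioc (0:ℝ) 1, (∑' n, F n u) := by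
    rw [intervalIntegral.integral_of_le zero_le_one]
    exact setIntegral_congr_fun measurableSet_Ioc (fun u _ => (hptw u).symm)
  rw [hlhs, ← hswap]
  congr 1 with n
  have : ∫ u in Set.Ioc (0:ℝ) 1, F n u =
      ((-1) ^ n * x ^ (2 * n + 1) / (((2 * n + 1).factorial : ℕ) : ℝ)) *
        ∫ u in (0:ℝ)..1, u ^ c * (1 - u) ^ (2 * n + 1) := by
    rw [intervalIntegral.integral_of_le zero_le_one, ← MeasureTheory.integral_const_mul]
  rw [this, beta_int (2 * n + 1) c hc]
  have hne : (((2 * n + 1).factorial : ℕ) : ℝ) ≠ 0 := by positivity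
  rw [show 2 * n + 1 + 1 = 2 * n + 2 from rfl]
  field_simp


lemma poch_doubling (b : ℂ) : ∀ n : ℕ, poch b n * poch (b + 1/2) n * 4 ^ n = poch (2 * b) (2 * n) := by
  intro n
  induction n with
  | zero => simp [poch]
  | succ n ih =>
    have h2 : 2 * (n + 1) = (2 * n + 1) + 1 := by ring
    rw [poch, poch, Finset.prod_range_succ, Finset.prod_range_succ, h2, poch,
      Finset.prod_range_succ, Finset.prod_range_succ, ← poch, ← poch, ← poch]
    rw [← ih]
    push_cast
    ring

lemma poch_real (r : ℝ) (n : ℕ) :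
    poch ((r : ℂ)) n = ((∏ i ∈ Finset.range n, (r + i) : ℝ) : ℂ) := by
  rw [poch]
  push_cast
  rfl

lemma lommel_reduce (s : ℝ) (hs : s < -1) {x : ℝ} (hx : 0 < x) :
    lommel_s (-(s : ℂ) - 1 / 2) (1 / 2) ((x : ℝ) : ℂ) =
      ((x ^ (-s - 1/2 : ℝ) * ∫ u in (0:ℝ)..1, u ^ (-s - 1 : ℝ) * Real.sin (x * (1 - u)) : ℝ) : ℂ) := by
  set c : ℝ := -s - 1 with hcdef
  have hc0 : 0 < c := by rw [hcdef]; linarith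
  have hP : ∀ n : ℕ, (0:ℝ) < ∏ i ∈ Finset.range n, (c + 3 + i) :=
    fun n => Finset.prod_pos fun i _ => by positivity
  have hD : ∀ n : ℕ, (0:ℝ) < ∏ j ∈ Finset.range n, (c + 1 + j) :=
    fun n => Finset.prod_pos fun i _ => by positivity
  rw [lommel_s]
  -- exponent
  have hμ1 : -(s : ℂ) - 1 / 2 + 1 = ((c + 3/2 : ℝ) : ℂ) := by rw [hcdef]; push_cast; ring
  have hz : ((x:ℝ):ℂ) ^ (-(s : ℂ) - 1 / 2 + 1) = ((x ^ (c + 3/2 : ℝ) : ℝ) : ℂ) := by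
    rw [hμ1, Complex.ofReal_cpow hx.le]
  -- denominator
  have hden : (-(s : ℂ) - 1 / 2 - 1 / 2 + 1) * (-(s : ℂ) - 1 / 2 + 1 / 2 + 1) =
      (((c + 1) * (c + 2) : ℝ) : ℂ) := by rw [hcdef]; push_cast; ring
  -- oneF2
  have hb₁ : (-(s : ℂ) - 1 / 2 - 1 / 2 + 3) / 2 = (((c + 3) / 2 : ℝ) : ℂ) := by
    rw [hcdef]; push_cast; ring
  have hb₂ : (-(s : ℂ) - 1 / 2 + 1 / 2 + 3) / 2 = (((c + 3) / 2 : ℝ) : ℂ) + 1 / 2 := by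
    rw [hcdef]; push_cast; ring
  have hterm : ∀ n : ℕ,
      (-((x:ℝ):ℂ) ^ 2 / 4) ^ n / (poch ((((c + 3) / 2 : ℝ) : ℂ)) n * poch ((((c + 3) / 2 : ℝ) : ℂ) + 1/2) n) =
      (((-1) ^ n * x ^ (2 * n) / ∏ i ∈ Finset.range (2 * n), (c + 3 + i) : ℝ) : ℂ) := by
    intro n
    have hdb := poch_doubling ((((c + 3) / 2 : ℝ) : ℂ)) n
    have h2b : 2 * ((((c + 3) / 2 : ℝ) : ℂ)) = (((c + 3 : ℝ)) : ℂ) := by push_cast; ring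
    rw [h2b, poch_real (c + 3) (2 * n)] at hdb
    have h4 : ((4:ℂ)) ^ n ≠ 0 := by norm_num
    have hPn : ((((∏ i ∈ Finset.range (2*n), (c + 3 + i) : ℝ)) : ℂ)) ≠ 0 := by
      exact_mod_cast (hP (2*n)).ne'
    have hpp : poch ((((c + 3) / 2 : ℝ) : ℂ)) n * poch ((((c + 3) / 2 : ℝ) : ℂ) + 1/2) n =
        (((∏ i ∈ Finset.range (2*n), (c + 3 + i) : ℝ)) : ℂ) / 4 ^ n := by
      rw [eq_div_iff h4]
      exact hdb
    rw [hpp, div_div_eq_mul_div, Complex.ofReal_div]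
    congr 1
    have hh : (-((x:ℂ)) ^ 2 / 4) ^ n * 4 ^ n = (-((x:ℂ)) ^ 2) ^ n := by
      rw [div_pow, div_mul_cancel₀ _ h4]
    rw [hh, neg_pow, pow_mul]
    push_cast
    ring
  rw [hz, hden, hb₁, hb₂, oneF2]
  rw [tsum_congr hterm, ← Complex.ofReal_tsum]
  rw [← Complex.ofReal_div, ← Complex.ofReal_mul]
  congr 1
  rw [sin_int_series hc0 x, show (-s - 1/2 : ℝ) = c + 1/2 by rw [hcdef]; ring]
  rw [← tsum_mul_left, ← tsum_mul_left]
  apply tsum_congr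
  intro n
  have hDP : ∏ j ∈ Finset.range (2*n + 2), (c + 1 + (j:ℝ)) =
      (∏ i ∈ Finset.range (2*n), (c + 3 + (i:ℝ))) * (c+2) * (c+1) := by
    rw [Finset.prod_range_succ', Finset.prod_range_succ']
    have hcg : ∀ i ∈ Finset.range (2*n), (c + 1 + ((i + 1 + 1 : ℕ) : ℝ)) = c + 3 + (i:ℝ) :=
      fun i _ => by push_cast; ring
    rw [Finset.prod_congr rfl hcg]
    push_cast
    ring
  rw [hDP]
  have hx32 : x ^ (c + 3/2 : ℝ) = x ^ (c + 1/2 : ℝ) * x := by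
    rw [show (c + 3/2 : ℝ) = (c + 1/2) + 1 by ring, Real.rpow_add hx, Real.rpow_one]
  rw [hx32]
  have h1 : (c+1) ≠ 0 := by positivity
  have h2 : (c+2) ≠ 0 := by positivity
  have h3 : (∏ i ∈ Finset.range (2*n), (c + 3 + (i:ℝ))) ≠ 0 := (hP (2*n)).ne'
  rw [pow_succ]
  field_simp


lemma bern2 (u : ℝ) :
    (Polynomial.map (algebraMap ℚ ℝ) (Polynomial.bernoulli 2)).eval u = u ^ 2 - u + 1 / 6 := by
  have : Polynomial.bernoulli 2 = Polynomial.C (1/6) - Polynomial.X + Polynomial.X ^ 2 := by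
    simp [Polynomial.bernoulli_def, Finset.sum_range_succ]
    norm_num [bernoulli_one, bernoulli'_two]
    have hb : (bernoulli 2 : ℚ) = 1/6 := by
      rw [bernoulli]; norm_num [bernoulli'_two]
    simp only [Polynomial.monomial_one_right_eq_X_pow, hb]
    ring
  rw [this]
  simp
  ring

lemma cos_sum {u : ℝ} (hu : u ∈ Set.Icc (0:ℝ) 1) :
    HasSum (fun k : ℕ => 1 / ((k:ℝ)+1) ^ 2 * Real.cos (2 * π * ((k:ℝ)+1) * u))
      (π ^ 2 * (u ^ 2 - u + 1/6)) := by
  have h := hasSum_one_div_nat_pow_mul_cos (k := 1) one_ne_zero hu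
  rw [bern2] at h
  have hval : ((-1:ℝ)) ^ (1+1) * (2*π) ^ (2*1) / 2 / ((2*1).factorial : ℝ) * (u^2 - u + 1/6)
      = π^2 * (u^2 - u + 1/6) := by
    have hfac : (2*1).factorial = 2 := by decide
    rw [hfac]
    push_cast
    ring
  rw [hval] at h
  have h0 : (fun n : ℕ => 1 / (n:ℝ) ^ (2*1) * Real.cos (2 * π * n * u)) 0 = 0 := by
    norm_num
  have h' := (hasSum_nat_add_iff (f := fun n : ℕ => 1 / (n:ℝ) ^ (2*1) * Real.cos (2 * π * n * u)) 1).mpr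
    (by simpa [h0] using h)
  convert h' using 2 with k
  · rfl
  · push_cast
    norm_num
  · norm_num

lemma Jsum {c : ℝ} (hc : 0 < c) :
    HasSum (fun k : ℕ => 1 / ((k:ℝ)+1) ^ 2 * ∫ u in (0:ℝ)..1, u ^ (c-1) * Real.cos (2 * π * ((k:ℝ)+1) * u))
      (π ^ 2 * (1/(c+2) - 1/(c+1) + 1/(6*c))) := by
  have hrint : IntervalIntegrable (fun u : ℝ => u ^ (c-1)) volume 0 1 :=
    intervalIntegral.intervalIntegrable_rpow' (by linarith)
  set F : ℕ → ℝ → ℝ := fun k u => u ^ (c-1) * (1 / ((k:ℝ)+1) ^ 2 * Real.cos (2 * π * ((k:ℝ)+1) * u))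
    with hF
  have hFI : ∀ k, IntegrableOn (F k) (Set.Ioc (0:ℝ) 1) volume := by
    intro k
    have : IntervalIntegrable (F k) volume 0 1 :=
      hrint.mul_continuousOn (by fun_prop)
    exact (intervalIntegrable_iff_integrableOn_Ioc_of_le zero_le_one).mp this
  have hg : ∀ k : ℕ, IntegrableOn (fun u : ℝ => u ^ (c-1) * (1 / ((k:ℝ)+1) ^ 2)) (Set.Ioc (0:ℝ) 1) volume := by
    intro k
    exact (intervalIntegrable_iff_integrableOn_Ioc_of_le zero_le_one).mp
      (hrint.mul_continuousOn (by fun_prop))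
  have hsummable2 : Summable (fun k : ℕ => 1 / ((k:ℝ)+1) ^ 2) := by
    have := (Real.summable_one_div_nat_pow (p := 2)).mpr (by norm_num)
    have h2 := this.comp_injective (Nat.succ_injective)
    apply h2.congr
    intro k
    show 1 / ((k.succ : ℕ) : ℝ) ^ 2 = 1 / ((k:ℝ)+1) ^ 2
    push_cast
    ring
  have hCc : ∀ k : ℕ, (∫ u in Set.Ioc (0:ℝ) 1, ‖F k u‖) ≤
      (∫ u in Set.Ioc (0:ℝ) 1, u ^ (c-1)) * (1 / ((k:ℝ)+1) ^ 2) := by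
    intro k
    have hle : ∀ u ∈ Set.Ioc (0:ℝ) 1, ‖F k u‖ ≤ u ^ (c-1) * (1 / ((k:ℝ)+1) ^ 2) := by
      intro u hu
      have hu0 : 0 < u := hu.1
      have h1 : (0:ℝ) ≤ u ^ (c-1) := Real.rpow_nonneg hu0.le _
      rw [hF, norm_mul, Real.norm_of_nonneg h1, norm_mul]
      have : ‖1 / ((k:ℝ)+1) ^ 2‖ * ‖Real.cos (2 * π * ((k:ℝ)+1) * u)‖ ≤ 1 / ((k:ℝ)+1) ^ 2 := by
        rw [Real.norm_of_nonneg (by positivity)]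
        calc (1 / ((k:ℝ)+1) ^ 2) * ‖Real.cos (2 * π * ((k:ℝ)+1) * u)‖
            ≤ (1 / ((k:ℝ)+1) ^ 2) * 1 := by
              apply mul_le_mul_of_nonneg_left _ (by positivity)
              rw [Real.norm_eq_abs]; exact Real.abs_cos_le_one _
          _ = 1 / ((k:ℝ)+1) ^ 2 := by ring
      exact mul_le_mul_of_nonneg_left this h1
    calc (∫ u in Set.Ioc (0:ℝ) 1, ‖F k u‖)
        ≤ ∫ u in Set.Ioc (0:ℝ) 1, u ^ (c-1) * (1 / ((k:ℝ)+1) ^ 2) :=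
          setIntegral_mono_on (hFI k).norm (hg k) measurableSet_Ioc hle
      _ = (∫ u in Set.Ioc (0:ℝ) 1, u ^ (c-1)) * (1 / ((k:ℝ)+1) ^ 2) := by
          rw [← integral_mul_const]
  have hnorm : Summable fun k => ∫ u in Set.Ioc (0:ℝ) 1, ‖F k u‖ :=
    Summable.of_nonneg_of_le (fun k => integral_nonneg fun u => norm_nonneg _) hCc
      (hsummable2.mul_left _)
  have hswap := MeasureTheory.hasSum_integral_of_summable_integral_norm hFI hnorm
  -- identify the integral of the tsum
  have htsum_eq : ∫ u in Set.Ioc (0:ℝ) 1, (∑' k, F k u) =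
      π ^ 2 * (1/(c+2) - 1/(c+1) + 1/(6*c)) := by
    have hptw : ∀ u ∈ Set.Ioc (0:ℝ) 1, (∑' k, F k u) =
        π ^ 2 * (u ^ (c+1) - u ^ c + (1/6) * u ^ (c-1)) := by
      intro u hu
      have hu0 : 0 < u := hu.1
      have h1 := ((cos_sum ⟨hu0.le, hu.2⟩).mul_left (u ^ (c-1))).tsum_eq
      rw [hF]
      rw [h1]
      have e2 : u ^ (c-1) * u ^ (2:ℕ) = u ^ (c+1) := by
        rw [← Real.rpow_natCast u 2, ← Real.rpow_add hu0]
        congr 1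
        push_cast
        ring
      have e1 : u ^ (c-1) * u = u ^ c := by
        have h := Real.rpow_add hu0 (c-1) 1
        rw [Real.rpow_one] at h
        rw [← h]
        congr 1
        ring
      calc u ^ (c-1) * (π^2 * (u^2 - u + 1/6))
          = π^2 * (u ^ (c-1) * u^(2:ℕ) - u ^ (c-1) * u + (1/6) * u ^ (c-1)) := by ring
        _ = π ^ 2 * (u ^ (c+1) - u ^ c + (1/6) * u ^ (c-1)) := by
            rw [e2, e1]
    rw [setIntegral_congr_fun measurableSet_Ioc hptw]
    rw [← intervalIntegral.integral_of_le zero_le_one]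
    have i1 : IntervalIntegrable (fun u : ℝ => u ^ (c+1)) volume 0 1 :=
      intervalIntegral.intervalIntegrable_rpow' (by linarith)
    have i2 : IntervalIntegrable (fun u : ℝ => u ^ c) volume 0 1 :=
      intervalIntegral.intervalIntegrable_rpow' (by linarith)
    have i3 : IntervalIntegrable (fun u : ℝ => (1/6 : ℝ) * u ^ (c-1)) volume 0 1 :=
      (intervalIntegral.intervalIntegrable_rpow' (by linarith)).const_mul _
    rw [intervalIntegral.integral_const_mul]
    rw [intervalIntegral.integral_add (i1.sub i2) i3, intervalIntegral.integral_sub i1 i2,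
      intervalIntegral.integral_const_mul]
    rw [integral_rpow (Or.inl (by linarith)), integral_rpow (Or.inl (by linarith)),
      integral_rpow (Or.inl (by linarith))]
    rw [Real.one_rpow, Real.zero_rpow (by linarith), Real.zero_rpow (by linarith),
      Real.zero_rpow (by linarith)]
    have : c - 1 + 1 = c := by ring
    rw [this]
    simp only [Real.one_rpow]
    field_simp
    ring
  rw [htsum_eq] at hswap
  convert hswap using 2 with k
  rfl
  rw [hF, intervalIntegral.integral_of_le zero_le_one, ← integral_const_mul]
  congr 1 with u
  ring


lemma IBP {c : ℝ} (hc : 0 < c) {x : ℝ} (hx : 0 < x) :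
    ∫ u in (0:ℝ)..1, u ^ c * Real.sin (x * u) =
      -Real.cos x / x + (c / x) * ∫ u in (0:ℝ)..1, u ^ (c-1) * Real.cos (x * u) := by
  set g : ℝ → ℝ := fun v => -(v ^ c * Real.cos (x * v)) / x with hg
  set f' : ℝ → ℝ := fun v => v ^ c * Real.sin (x * v) - c / x * (v ^ (c-1) * Real.cos (x * v))
    with hf'
  have i1 : IntervalIntegrable (fun u : ℝ => u ^ c * Real.sin (x * u)) volume 0 1 :=
    (((cont_rpow hc).mul (by fun_prop)).continuousOn).intervalIntegrable
  have i2 : IntervalIntegrable (fun u : ℝ => u ^ (c-1) * Real.cos (x * u)) volume 0 1 :=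
    (intervalIntegral.intervalIntegrable_rpow' (by linarith)).mul_continuousOn (by fun_prop)
  have hif' : IntervalIntegrable f' volume 0 1 := i1.sub (i2.const_mul _)
  have hcontg : ContinuousOn g (Set.Icc 0 1) :=
    ((((cont_rpow hc).mul (by fun_prop)).neg.div_const x).continuousOn)
  have hderiv : ∀ u ∈ Set.Ioo (0:ℝ) 1, HasDerivWithinAt g (f' u) (Set.Ioi u) u := by
    intro u hu
    have hu0 : 0 < u := hu.1
    have h1 : HasDerivAt (fun v : ℝ => v ^ c) (c * u ^ (c-1)) u :=
      Real.hasDerivAt_rpow_const (Or.inl hu0.ne')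
    have hlin : HasDerivAt (fun v : ℝ => x * v) x u := by
      simpa using (hasDerivAt_id u).const_mul x
    have h2 : HasDerivAt (fun v : ℝ => Real.cos (x * v)) (-Real.sin (x * u) * x) u :=
      (Real.hasDerivAt_cos (x * u)).comp u hlin
    have h3 := ((h1.mul h2).neg.div_const x)
    have : -(c * u ^ (c-1) * Real.cos (x * u) + u ^ c * (-Real.sin (x * u) * x)) / x = f' u := by
      rw [hf']
      field_simp
      ring
    rw [this] at h3
    exact h3.hasDerivWithinAt
  have key := intervalIntegral.integral_eq_sub_of_hasDeriv_right_of_le zero_le_one hcontg hderiv hif'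
  have hg1 : g 1 = -Real.cos x / x := by
    rw [hg]; simp [Real.one_rpow]
  have hg0 : g 0 = 0 := by
    rw [hg]; simp [Real.zero_rpow hc.ne']
  rw [hg1, hg0, sub_zero] at key
  rw [hf'] at key
  rw [intervalIntegral.integral_sub i1 (i2.const_mul _)] at key
  rw [intervalIntegral.integral_const_mul] at key
  linarith [key]

theorem lommel_s_series_eval_a_one (s : ℝ) (hs : s < -1) :
    ∑' k : ℕ, lommel_s (-(s : ℂ) - 1 / 2) (1 / 2) ((2 * π * (k + 1) : ℝ) : ℂ) /
        ((k : ℂ) + 1) ^ ((1 : ℂ) / 2 - s) =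
      -1 / (2 * (s : ℂ) * ((2 * π : ℝ) : ℂ) ^ ((s : ℂ) - 1 / 2)) *
        (1 / 2 + 1 / ((s : ℂ) - 1)) := by
  have hπ := Real.pi_pos
  set c : ℝ := -s - 1 with hcdef
  have hc0 : 0 < c := by rw [hcdef]; linarith
  set r : ℕ → ℝ := fun k => (2*π) ^ (c + 1/2 : ℝ) *
      (1/(2*π*((k:ℝ)+1)^2) - c/(2*π) *
        (1/((k:ℝ)+1)^2 * ∫ u in (0:ℝ)..1, u ^ (c-1) * Real.cos (2*π*((k:ℝ)+1)*u)))
    with hr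
  have hterm : ∀ k : ℕ, lommel_s (-(s : ℂ) - 1 / 2) (1 / 2) ((2 * π * (k + 1) : ℝ) : ℂ) /
        ((k : ℂ) + 1) ^ ((1 : ℂ) / 2 - s) = ((r k : ℝ) : ℂ) := by
    intro k
    have hk1 : (0:ℝ) < (k:ℝ) + 1 := by positivity
    have hx : (0:ℝ) < 2 * π * ((k:ℝ) + 1) := by positivity
    rw [lommel_reduce s hs hx]
    have hdenom : ((k : ℂ) + 1) ^ ((1 : ℂ) / 2 - s) =
        (((((k:ℝ)+1) ^ (1/2 - s : ℝ) : ℝ)) : ℂ) := by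
      rw [Complex.ofReal_cpow hk1.le]
      push_cast
      ring_nf
    rw [hdenom, ← Complex.ofReal_div]
    congr 1
    -- now a real identity
    set X : ℝ := 2 * π * ((k:ℝ) + 1) with hX
    have hflip : ∫ u in (0:ℝ)..1, u ^ (-s-1 : ℝ) * Real.sin (X * (1 - u)) =
        -∫ u in (0:ℝ)..1, u ^ (-s-1 : ℝ) * Real.sin (X * u) := by
      rw [← intervalIntegral.integral_neg]
      apply intervalIntegral.integral_congr
      intro u _
      have : X * (1 - u) = ((k+1 : ℕ) : ℝ) * (2 * π) - X * u := by
        rw [hX]; push_cast; ring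
      show u ^ (-s-1 : ℝ) * Real.sin (X * (1 - u)) = -(u ^ (-s-1 : ℝ) * Real.sin (X * u))
      rw [this, Real.sin_nat_mul_two_pi_sub]
      ring
    have hIBP := IBP (show (0:ℝ) < -s-1 by linarith) hx
    have hcos : Real.cos X = 1 := by
      have : X = ((k+1 : ℕ) : ℝ) * (2 * π) := by rw [hX]; push_cast; ring
      rw [this, Real.cos_nat_mul_two_pi]
    rw [hflip, hIBP, hcos]
    -- rpow algebra
    have e1 : X ^ (-s - 1/2 : ℝ) = (2*π) ^ (-s-1/2 : ℝ) * (((k:ℝ)+1)) ^ (-s-1/2 : ℝ) := by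
      rw [hX, Real.mul_rpow (by positivity) hk1.le]
    have e2 : (((k:ℝ)+1)) ^ (-s-1/2 : ℝ) / (((k:ℝ)+1)) ^ (1/2 - s : ℝ) = (((k:ℝ)+1))⁻¹ := by
      rw [← Real.rpow_sub hk1, show (-s-1/2 : ℝ) - (1/2 - s) = -1 by ring, Real.rpow_neg_one]
    have e3 : (-s - 1/2 : ℝ) = c + 1/2 := by rw [hcdef]; ring
    have e4 : (-s - 1 : ℝ) = c := by rw [hcdef]
    rw [e4] at *
    rw [hr]
    rw [e1]
    have expand : (2*π) ^ (-s-1/2 : ℝ) * ((k:ℝ)+1) ^ (-s-1/2 : ℝ) *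
        (-(-1 / X + c / X * ∫ u in (0:ℝ)..1, u ^ (c-1) * Real.cos (X * u))) /
          ((k:ℝ)+1) ^ (1/2 - s : ℝ) =
        (2*π) ^ (-s-1/2 : ℝ) *
          ((((k:ℝ)+1)) ^ (-s-1/2 : ℝ) / (((k:ℝ)+1)) ^ (1/2 - s : ℝ)) *
          (1 / X - c / X * ∫ u in (0:ℝ)..1, u ^ (c-1) * Real.cos (X * u)) := by
      ring
    rw [expand, e2, e3]
    have hk1ne : ((k:ℝ)+1) ≠ 0 := hk1.ne'
    rw [hX, mul_assoc]
    congr 1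
    set J := ∫ u in (0:ℝ)..1, u ^ (c - 1) * Real.cos (2 * π * ((k:ℝ) + 1) * u) with hJdef
    have hπne : π ≠ 0 := hπ.ne'
    have hA : (((k:ℝ)+1))⁻¹ * (1/(2*π*((k:ℝ)+1))) = 1/(2*π*((k:ℝ)+1)^2) := by
      field_simp
    have hB : (((k:ℝ)+1))⁻¹ * (c/(2*π*((k:ℝ)+1)) * J) = c/(2*π) * (1/((k:ℝ)+1)^2 * J) := by
      field_simp
    rw [mul_sub, hA, ← hB]
  rw [tsum_congr hterm, ← Complex.ofReal_tsum]
  -- evaluate the real sum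
  have hzeta : HasSum (fun k : ℕ => 1/(2*π*((k:ℝ)+1)^2)) (π/12) := by
    have h := hasSum_zeta_two
    have h0 : (fun n : ℕ => (1:ℝ) / (n:ℝ) ^ 2) 0 = 0 := by norm_num
    have h1 := (hasSum_nat_add_iff (f := fun n : ℕ => (1:ℝ) / (n:ℝ) ^ 2) 1).mpr
      (by simpa [h0] using h)
    have h2 := h1.mul_left (1/(2*π))
    have : 1/(2*π) * (π^2/6) = π/12 := by field_simp; ring
    rw [this] at h2
    have heq : (fun k : ℕ => 1/(2*π*((k:ℝ)+1)^2)) =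
        fun k : ℕ => 1/(2*π) * ((1:ℝ) / (((k+1:ℕ)):ℝ) ^ 2) := by
      funext k
      push_cast
      field_simp
    rw [heq]
    exact h2
  have hJ := Jsum hc0
  have hR : HasSum r ((2*π) ^ (c + 1/2 : ℝ) *
      (π/12 - c/(2*π) * (π^2 * (1/(c+2) - 1/(c+1) + 1/(6*c))))) :=
    (hzeta.sub (hJ.mul_left (c/(2*π)))).mul_left _
  rw [hR.tsum_eq]
  -- final arithmetic
  have hsne : (s:ℝ) ≠ 0 := by linarith
  have hs1ne : (s:ℝ) - 1 ≠ 0 := by linarith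
  have ht : (0:ℝ) < (2*π) ^ (s - 1/2 : ℝ) := Real.rpow_pos_of_pos (by positivity) _
  have hprod : (2*π) ^ (c + 1/2 : ℝ) = ((2*π) ^ (s - 1/2 : ℝ))⁻¹ * (2*π)⁻¹ := by
    have hmul : (2*π) ^ (c + 1/2 : ℝ) * (2*π) ^ (s - 1/2 : ℝ) = (2*π)⁻¹ := by
      rw [← Real.rpow_add (by positivity), show (c+1/2) + (s-1/2) = (-1:ℝ) by rw [hcdef]; ring,
        Real.rpow_neg_one]
    have h2 : (2*π) ^ (c + 1/2 : ℝ) = (2*π)⁻¹ / (2*π) ^ (s - 1/2 : ℝ) := by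
      rw [eq_div_iff ht.ne']
      exact hmul
    rw [h2, div_eq_mul_inv]
    ring
  have hbr : π/12 - c/(2*π) * (π^2 * (1/(c+2) - 1/(c+1) + 1/(6*c))) = π*c/(2*(c+1)*(c+2)) := by
    have h1 : c ≠ 0 := hc0.ne'
    have h2 : c + 1 ≠ 0 := by positivity
    have h3 : c + 2 ≠ 0 := by positivity
    have hπne : π ≠ 0 := hπ.ne'
    field_simp
    ring
  have hreal : (2*π) ^ (c + 1/2 : ℝ) *
      (π/12 - c/(2*π) * (π^2 * (1/(c+2) - 1/(c+1) + 1/(6*c)))) =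
      -1 / (2*s*(2*π) ^ (s-1/2:ℝ)) * (1/2 + 1/(s-1)) := by
    rw [hbr, hprod, hcdef]
    rw [show (-s - 1 + 1 : ℝ) = -s by ring, show (-s - 1 + 2 : ℝ) = 1 - s by ring]
    have h1s : (1:ℝ) - s ≠ 0 := by linarith
    have hne : (2*π) ^ (s - 1/2 : ℝ) ≠ 0 := ht.ne'
    field_simp
    ring
  rw [hreal]
  have hcast : ((2*π:ℝ):ℂ) ^ ((s:ℂ) - 1/2) = (((2*π) ^ (s-1/2:ℝ) : ℝ) : ℂ) := by
    rw [show (s:ℂ) - 1/2 = ((s - 1/2 : ℝ) : ℂ) by push_cast; ring]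
    rw [← Complex.ofReal_cpow (by positivity)]
  rw [hcast]
  have htne : ((2*π) ^ (s-1/2:ℝ) : ℝ) ≠ 0 := ht.ne'
  push_cast
  field_simp
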